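/- Matrix identity underlying the alternants formula: H_{α}^{(r-m+1)} M^{(r)} = A_{α}^{(r)}, where for each i,j: Σ_{k=1}^m h_{α_i - m + k}^{(r - α_i + 1)} (-1)^{m-k} t_{j,m}(e_{m-k}^{(r+k+1-m)}[m]) = t_{j,m}( h_{α_i}^{(r-α_i+1)}(x_m) ), with [m] denoting loop elementary functions in x_1,...,x_{m-1} only and h(x_m) the loop homogeneous function in the single variable-block x_m. -/

import Mathlib

open Finset

/-- Multiplication of (upper-triangular) N-by-N matrices: for upper triangular
matrices this agrees with true matrix multiplication. -/
def utMul {K : Type*} [Field K] (A B : Matrix ℕ ℕ K) : Matrix ℕ ℕ K :=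
  Matrix.of fun i j => ∑ t ∈ Finset.Icc i j, A i t * B t j

/-- The identity infinite matrix. -/
def oneM {K : Type*} [Field K] : Matrix ℕ ℕ K := Matrix.of fun i j => if i = j then 1 else 0

/-- Checkerboard conjugate `A^c` of an infinite matrix. -/
def chkInf {K : Type*} [Field K] (A : Matrix ℕ ℕ K) : Matrix ℕ ℕ K :=
  Matrix.of fun i j => (-1 : K) ^ (i + j) * A i j

/-- The whirl `M(a_1, …, a_n)`: upper bitriangular with 1's on the diagonal and
`a_i` (index mod `n`) on the superdiagonal. -/
def whirl {K : Type*} [Field K] (n : ℕ) (a : ZMod n → K) : Matrix ℕ ℕ K :=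
  Matrix.of fun i j => if j = i then 1 else if j = i + 1 then a (i : ZMod n) else 0

/-- `κ^{(r)}(x,y) = Σ_{j=0}^{n-1} y^{(r+1)}⋯y^{(r+j)} x^{(r+j+1)}⋯x^{(r+n-1)}`. -/
def kappa {K : Type*} [Field K] (n : ℕ) (xx yy : ZMod n → K) (r : ZMod n) : K :=
  ∑ j ∈ Finset.range n,
    (∏ t ∈ Finset.Icc 1 j, yy (r + (t : ZMod n))) *
      ∏ t ∈ Finset.Icc (j + 1) (n - 1), xx (r + (t : ZMod n))

/-- Loop elementary symmetric function
`e_k^{(r)} = Σ_{i_1 < ⋯ < i_k} x_{i_1}^{(r)} x_{i_2}^{(r+1)} ⋯ x_{i_k}^{(r+k-1)}`. -/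
def loopE {K : Type*} [Field K] (m n : ℕ) (x : Fin m → ZMod n → K) (k : ℕ) (r : ZMod n) : K :=
  ∑ f ∈ Finset.univ.filter (fun f : Fin k → Fin m => ∀ a b : Fin k, a < b → f a < f b),
    ∏ t : Fin k, x (f t) (r + ((t : ℕ) : ZMod n))

/-- Loop homogeneous symmetric function
`h_k^{(r)} = Σ_{i_k ≥ ⋯ ≥ i_1} x_{i_k}^{(r)} x_{i_{k-1}}^{(r+1)} ⋯ x_{i_1}^{(r+k-1)}`,
encoded via the weakly increasing sequence `f = (i_1, …, i_k)`. -/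
def loopH {K : Type*} [Field K] (m n : ℕ) (x : Fin m → ZMod n → K) (k : ℕ) (r : ZMod n) : K :=
  ∑ f ∈ Finset.univ.filter (fun f : Fin k → Fin m => ∀ a b : Fin k, a ≤ b → f a ≤ f b),
    ∏ t : Fin k, x (f t) (r + ((k - 1 - (t : ℕ) : ℕ) : ZMod n))

/-- Loop homogeneous symmetric function with integer index, `0` for negative index. -/
noncomputable def loopHZ {K : Type*} [Field K] (m n : ℕ) (x : Fin m → ZMod n → K)
    (k : ℤ) (r : ZMod n) : K :=
  if k < 0 then 0 else loopH m n x k.toNat r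

/-- Single-block loop homogeneous function `h_a^{(b)}(y) = y^{(b+a-1)} y^{(b+a-2)} ⋯ y^{(b)}`. -/
def singleH {K : Type*} [Field K] (n : ℕ) (y : ZMod n → K) (a : ℕ) (b : ZMod n) : K :=
  ∏ s ∈ Finset.range a, y (b + (s : ZMod n))

/-- `π = y^{(1)} y^{(2)} ⋯ y^{(n)}`, the product over all colors of one block. -/
def pivar {K : Type*} [Field K] (n : ℕ) [NeZero n] (y : ZMod n → K) : K := ∏ j : ZMod n, y j

namespace S16

lemma fin_app_congr {β : Sort*} {k : ℕ} (f : Fin k → β) {i j : Fin k} (h : (i : ℕ) = (j : ℕ)) :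
    f i = f j := congrArg f (Fin.ext h)

/-- The splice condition. -/
def P (m a k : ℕ) (g : Fin a → Fin m) : Prop :=
  (∀ p q : Fin a, p < q → (q : ℕ) < k → g q < g p) ∧
  (∀ p : Fin a, (p : ℕ) < k → (g p : ℕ) < m - 1) ∧
  (∀ p q : Fin a, k ≤ (p : ℕ) → p ≤ q → g p ≤ g q)

noncomputable def Gset (m a k : ℕ) : Finset (Fin a → Fin m) :=
  @Finset.filter _ (fun g => P m a k g) (Classical.decPred _) Finset.univ

lemma mem_Gset {m a k : ℕ} {g : Fin a → Fin m} : g ∈ Gset m a k ↔ P m a k g := by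
  simp [Gset, Finset.mem_filter]

lemma prod_fin_eq_range {M : Type*} [CommMonoid M] (N : ℕ) (f : Fin N → M) :
    ∏ i : Fin N, f i = ∏ q ∈ Finset.range N, if h : q < N then f ⟨q, h⟩ else 1 := by
  rw [← Fin.prod_univ_eq_prod_range (fun q => if h : q < N then f ⟨q, h⟩ else 1) N]
  exact Finset.prod_congr rfl fun p _ => by simp [Fin.eta]

lemma bridge {K : Type*} [Field K] (m n : ℕ) [NeZero n] (hm : 1 ≤ m)
    (x : Fin m → ZMod n → K) (a k : ℕ) (hk : k ≤ a) (ρ : ZMod n) :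
    loopE (m-1) n (fun b => x (Fin.castLE (Nat.sub_le m 1) b)) k (ρ - (k : ZMod n)) *
      loopH m n x (a - k) (ρ - (a : ZMod n))
    = ∑ g ∈ Gset m a k, ∏ p : Fin a, x (g p) (ρ - 1 - ((p : ℕ) : ZMod n)) := by
  classical
  rw [loopE, loopH, Finset.sum_mul_sum, ← Finset.sum_product']
  refine Finset.sum_bij' (i := fun fp _ => fun p : Fin a =>
      if h : (p : ℕ) < k then Fin.castLE (Nat.sub_le m 1) (fp.1 ⟨k - 1 - p, by omega⟩)
      else fp.2 ⟨(p : ℕ) - k, by omega⟩)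
    (j := fun g hg =>
      (fun t : Fin k => ⟨(g ⟨k - 1 - (t : ℕ), by omega⟩ : ℕ), by
          refine (mem_Gset.mp hg).2.1 ⟨k - 1 - (t : ℕ), by omega⟩ ?_
          show k - 1 - (t : ℕ) < k
          have := t.isLt; omega⟩,
       fun t : Fin (a - k) => g ⟨k + (t : ℕ), by omega⟩))
    ?_ ?_ ?_ ?_ ?_
  · -- i maps into Gset
    rintro ⟨fe, fh⟩ ha
    rw [Finset.mem_product, Finset.mem_filter, Finset.mem_filter] at ha
    obtain ⟨⟨-, he⟩, -, hh⟩ := ha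
    rw [mem_Gset]
    refine ⟨?_, ?_, ?_⟩
    · intro p q hpq hq
      have hpq' : (p : ℕ) < (q : ℕ) := hpq
      have hp : (p : ℕ) < k := lt_trans hpq' hq
      simp only [dif_pos hp, dif_pos hq]
      have h2 : (⟨k - 1 - (q : ℕ), by omega⟩ : Fin k) < ⟨k - 1 - (p : ℕ), by omega⟩ := by
        show k - 1 - (q : ℕ) < k - 1 - (p : ℕ); omega
      exact he _ _ h2
    · intro p hp
      simp only [dif_pos hp]
      exact (fe ⟨k - 1 - (p : ℕ), by omega⟩).isLt
    · intro p q hp hq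
      have hq' : k ≤ (q : ℕ) := le_trans hp hq
      simp only [dif_neg (not_lt.mpr hp), dif_neg (not_lt.mpr hq')]
      refine hh _ _ ?_
      show (p : ℕ) - k ≤ (q : ℕ) - k
      have : (p : ℕ) ≤ (q : ℕ) := hq
      omega
  · -- j maps into product
    intro g hg
    rw [Finset.mem_product, Finset.mem_filter, Finset.mem_filter]
    obtain ⟨hdec, hbd, hinc⟩ := mem_Gset.mp hg
    refine ⟨⟨Finset.mem_univ _, ?_⟩, Finset.mem_univ _, ?_⟩
    · intro s t hst
      have hst' : (s : ℕ) < (t : ℕ) := hst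
      have ht := t.isLt
      have h2 := hdec ⟨k - 1 - (t : ℕ), by omega⟩ ⟨k - 1 - (s : ℕ), by omega⟩
        (show k - 1 - (t : ℕ) < k - 1 - (s : ℕ) by omega)
        (show k - 1 - (s : ℕ) < k by omega)
      exact h2
    · intro s t hst
      have hst' : (s : ℕ) ≤ (t : ℕ) := hst
      exact hinc ⟨k + (s:ℕ), by omega⟩ ⟨k + (t:ℕ), by omega⟩
        (show k ≤ k + (s : ℕ) by omega) (show k + (s:ℕ) ≤ k + (t:ℕ) by omega)
  · -- left inverse
    rintro ⟨fe, fh⟩ ha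
    refine Prod.ext ?_ ?_
    · funext t
      have ht := t.isLt
      apply Fin.ext
      show ((if h : _ then _ else _ : Fin m) : ℕ) = _
      split
      · next h =>
        simp only [Fin.coe_castLE]
        exact congrArg Fin.val (fin_app_congr fe
          (by show k - 1 - (k - 1 - (t : ℕ)) = (t : ℕ); omega))
      · next h => exact absurd (by show k - 1 - (t:ℕ) < k; omega) h
    · funext t
      have ht := t.isLt
      show (if h : _ then _ else _ : Fin m) = _
      split
      · next h => exact absurd h (by show ¬ (k + (t:ℕ) < k); omega)
      · next h =>
        exact fin_app_congr fh (by show k + (t : ℕ) - k = (t : ℕ); omega)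
  · -- right inverse
    intro g hg
    funext p
    by_cases hp : (p : ℕ) < k
    · simp only [dif_pos hp]
      apply Fin.ext
      show ((g ⟨k - 1 - (k - 1 - (p : ℕ)), by omega⟩ : ℕ)) = (g p : ℕ)
      have := p.isLt
      rw [fin_app_congr g (i := ⟨k - 1 - (k - 1 - (p : ℕ)), by omega⟩) (j := p)
        (show k - 1 - (k - 1 - (p : ℕ)) = (p : ℕ) by omega)]
    · simp only [dif_neg hp]
      exact fin_app_congr g (show k + ((p : ℕ) - k) = (p : ℕ) by omega)
  · -- values
    rintro ⟨fe, fh⟩ ha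
    show (∏ t : Fin k, _) * (∏ t : Fin (a - k), _) = _
    rw [prod_fin_eq_range k, prod_fin_eq_range (a - k), prod_fin_eq_range a]
    rw [Finset.range_eq_Ico (a := a), ← Finset.prod_Ico_consecutive _ (Nat.zero_le k) hk,
      ← Finset.range_eq_Ico, Finset.prod_Ico_eq_prod_range]
    congr 1
    · rw [← Finset.prod_range_reflect]
      refine Finset.prod_congr rfl fun j hj => ?_
      have hj' : j < k := Finset.mem_range.mp hj
      beta_reduce
      rw [dif_pos (show k - 1 - j < k by omega), dif_pos (show j < a by omega),
        dif_pos (show ((⟨j, by omega⟩ : Fin a) : ℕ) < k from hj')]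
      congr 1
      show ρ - (k : ZMod n) + ((k - 1 - j : ℕ) : ZMod n) = ρ - 1 - ((j : ℕ) : ZMod n)
      rw [show k - 1 - j = k - (1 + j) from by omega, Nat.cast_sub (by omega : 1 + j ≤ k)]
      push_cast
      ring
    · refine Finset.prod_congr rfl fun i hi => ?_
      have hi' : i < a - k := Finset.mem_range.mp hi
      beta_reduce
      rw [dif_pos hi', dif_pos (show k + i < a by omega),
        dif_neg (show ¬ ((⟨k + i, by omega⟩ : Fin a) : ℕ) < k from by show ¬ (k + i < k); omega)]
      congr 1
      · exact fin_app_congr fh (show i = k + i - k by omega)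
      · show ρ - (a : ZMod n) + ((a - k - 1 - i : ℕ) : ZMod n) = ρ - 1 - ((k + i : ℕ) : ZMod n)
        rw [show a - k - 1 - i = a - (k + 1 + i) from by omega,
          Nat.cast_sub (by omega : k + 1 + i ≤ a)]
        push_cast
        ring


lemma sm_ge {k M : ℕ} (f : Fin k → Fin M) (hf : ∀ a b : Fin k, a < b → f a < f b) :
    ∀ j : Fin k, (j : ℕ) ≤ (f j : ℕ) := by
  intro j
  induction' hi : (j : ℕ) with i IH generalizing j
  · omega
  · have hj := j.isLt
    have h1 := IH ⟨i, by omega⟩ rfl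
    have h2 : f ⟨i, by omega⟩ < f j := hf _ _ (show i < (j : ℕ) by omega)
    have h3 : (f ⟨i, by omega⟩ : ℕ) < (f j : ℕ) := h2
    omega

lemma loopE_zero {K : Type*} [Field K] (M n : ℕ) [NeZero n] (x : Fin M → ZMod n → K)
    (k : ℕ) (hk : M < k) (r : ZMod n) : loopE M n x k r = 0 := by
  rw [loopE, Finset.filter_false_of_mem, Finset.sum_empty]
  intro f _ hf
  have h1 := sm_ge f hf ⟨M, hk⟩
  have h2 := (f ⟨M, hk⟩).isLt
  simp only [Fin.val_mk] at h1
  omega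

lemma Gset_empty (m a k : ℕ) (h1 : 1 ≤ m) (hm : m ≤ k) (hk : k ≤ a) : Gset m a k = ∅ := by
  rw [Finset.eq_empty_iff_forall_notMem]
  intro g hg
  obtain ⟨hdec, hbd, -⟩ := mem_Gset.mp hg
  have key : ∀ i (hik : i < k), (g ⟨i, by omega⟩ : ℕ) + i < m - 1 := by
    intro i
    induction' i with i IH
    · intro hik
      exact Nat.lt_of_lt_of_le (hbd ⟨0, by omega⟩ hik) (by omega)
    · intro hik
      have h1 := IH (by omega)
      have h2 := hdec ⟨i, by omega⟩ ⟨i + 1, by omega⟩ (show i < i + 1 by omega) hik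
      have h3 : (g ⟨i + 1, by omega⟩ : ℕ) < (g ⟨i, by omega⟩ : ℕ) := h2
      omega
  have h4 := key (m - 1) (by omega)
  omega

def CanDec (m a k : ℕ) (g : Fin a → Fin m) : Prop :=
  1 ≤ k ∧ ∀ h : k < a, g ⟨k - 1, by omega⟩ ≤ g ⟨k, h⟩

open Classical in
noncomputable def invol (m a : ℕ) (σ : Σ _ : ℕ, Fin a → Fin m) : Σ _ : ℕ, Fin a → Fin m :=
  if CanDec m a σ.1 σ.2 then ⟨σ.1 - 1, σ.2⟩ else ⟨σ.1 + 1, σ.2⟩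

lemma hA (m a : ℕ) (hm : 1 ≤ m) (k : ℕ) (g : Fin a → Fin m) (hk : k ≤ a) (hg : P m a k g)
    (hcd : CanDec m a k g) :
    P m a (k - 1) g ∧ ¬ CanDec m a (k - 1) g ∧
      ¬ (k - 1 = 0 ∧ g = fun _ => (⟨m - 1, Nat.sub_lt hm Nat.one_pos⟩ : Fin m)) := by
  obtain ⟨hdec, hbd, hinc⟩ := hg
  obtain ⟨hk1, hle⟩ := hcd
  have hk1a : k - 1 < a := by omega
  refine ⟨⟨?_, ?_, ?_⟩, ?_, ?_⟩
  · intro p q hpq hq; exact hdec p q hpq (by omega)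
  · intro p hp; exact hbd p (by omega)
  · intro p q hp hq
    by_cases hpk : k ≤ (p : ℕ)
    · exact hinc p q hpk hq
    · have hpv : (p : ℕ) = k - 1 := by omega
      by_cases hqk : k ≤ (q : ℕ)
      · have hka : k < a := by have := q.isLt; omega
        calc g p = g ⟨k - 1, hk1a⟩ := fin_app_congr g (show (p : ℕ) = k - 1 from hpv)
          _ ≤ g ⟨k, hka⟩ := by
              have := hle hka
              exact le_trans (le_of_eq (fin_app_congr g rfl)) this
          _ ≤ g q := hinc ⟨k, hka⟩ q (show k ≤ k from le_refl k) (show k ≤ (q : ℕ) from hqk)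
      · have hqv : (q : ℕ) = k - 1 := by
          have : (p : ℕ) ≤ (q : ℕ) := hq
          omega
        exact le_of_eq (fin_app_congr g (show (p : ℕ) = (q : ℕ) by omega))
  · rintro ⟨hk1', hle'⟩
    have hk2 : 2 ≤ k := by omega
    have hk2a : k - 2 < a := by omega
    have hc1 : (g ⟨k - 1 - 1, by omega⟩ : ℕ) ≤ (g ⟨k - 1, hk1a⟩ : ℕ) := hle' hk1a
    have hc2 : (g ⟨k - 1, hk1a⟩ : ℕ) < (g ⟨k - 2, hk2a⟩ : ℕ) :=
      hdec ⟨k - 2, hk2a⟩ ⟨k - 1, hk1a⟩ (show k - 2 < k - 1 by omega) (show k - 1 < k by omega)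
    have hc3 : (g ⟨k - 1 - 1, by omega⟩ : ℕ) = (g ⟨k - 2, hk2a⟩ : ℕ) :=
      congrArg Fin.val (fin_app_congr g (show k - 1 - 1 = k - 2 by omega))
    omega
  · rintro ⟨hk0, hgc⟩
    have h0a : 0 < a := by omega
    have h5 := hbd ⟨0, h0a⟩ (show (0 : ℕ) < k by omega)
    rw [hgc] at h5
    simp at h5

lemma hB (m a : ℕ) (hm : 1 ≤ m) (k : ℕ) (g : Fin a → Fin m) (hk : k ≤ a) (hg : P m a k g)
    (hne : ¬ (k = 0 ∧ g = fun _ => (⟨m - 1, Nat.sub_lt hm Nat.one_pos⟩ : Fin m)))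
    (hncd : ¬ CanDec m a k g) :
    k + 1 ≤ a ∧ P m a (k + 1) g ∧ CanDec m a (k + 1) g := by
  obtain ⟨hdec, hbd, hinc⟩ := hg
  have hka : k < a := by
    by_cases hk0 : k = 0
    · subst hk0
      rcases Nat.eq_zero_or_pos a with ha | ha
      · exfalso; apply hne
        refine ⟨rfl, funext fun p => ?_⟩
        exact absurd p.isLt (by omega)
      · omega
    · by_contra hna
      exact hncd ⟨by omega, fun h => absurd h (by omega)⟩
  have hk1a : k - 1 < a := by omega
  have hbd0 : k = 0 → (∀ p : Fin a, (p : ℕ) = 0 → (g p : ℕ) < m - 1) := by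
    intro hk0 p hp0
    by_contra hge
    apply hne
    refine ⟨hk0, funext fun q => ?_⟩
    have hpq : g p ≤ g q := hinc p q (by omega) (show (p : ℕ) ≤ (q : ℕ) by omega)
    have h1 : (g p : ℕ) ≤ (g q : ℕ) := hpq
    have h2 := (g q).isLt
    have h3 := (g p).isLt
    exact Fin.ext (show (g q : ℕ) = m - 1 by omega)
  have hlt : 1 ≤ k → (g ⟨k, hka⟩ : ℕ) < (g ⟨k - 1, hk1a⟩ : ℕ) := by
    intro hk1
    by_contra hnlt
    refine hncd ⟨hk1, fun h => ?_⟩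
    have e0 : g ⟨k, h⟩ = g ⟨k, hka⟩ := fin_app_congr g rfl
    have e1 : (g ⟨k - 1, by omega⟩ : ℕ) = (g ⟨k - 1, hk1a⟩ : ℕ) :=
      congrArg Fin.val (fin_app_congr g rfl)
    show (g ⟨k - 1, by omega⟩ : ℕ) ≤ (g ⟨k, h⟩ : ℕ)
    rw [e0, e1]
    omega
  refine ⟨by omega, ⟨?_, ?_, ?_⟩, by omega, fun h => ?_⟩
  · intro p q hpq hq
    by_cases hqk : (q : ℕ) < k
    · exact hdec p q hpq hqk
    · have hqv : (q : ℕ) = k := by omega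
      have hpv : (p : ℕ) < k := by have : (p : ℕ) < (q : ℕ) := hpq; omega
      have hk1 : 1 ≤ k := by omega
      have e1 : (g q : ℕ) = (g ⟨k, hka⟩ : ℕ) :=
        congrArg Fin.val (fin_app_congr g (show (q : ℕ) = k from hqv))
      have e2 : (g ⟨k, hka⟩ : ℕ) < (g ⟨k - 1, hk1a⟩ : ℕ) := hlt hk1
      by_cases hpk1 : (p : ℕ) = k - 1
      · have e3 : (g ⟨k - 1, hk1a⟩ : ℕ) = (g p : ℕ) :=
          congrArg Fin.val (fin_app_congr g (show k - 1 = (p : ℕ) by omega))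
        show (g q : ℕ) < (g p : ℕ)
        omega
      · have e3 : (g ⟨k - 1, hk1a⟩ : ℕ) < (g p : ℕ) :=
          hdec p ⟨k - 1, hk1a⟩ (show (p : ℕ) < k - 1 by omega) (show k - 1 < k by omega)
        show (g q : ℕ) < (g p : ℕ)
        omega
  · intro p hp
    by_cases hpk : (p : ℕ) < k
    · exact hbd p hpk
    · have hpv : (p : ℕ) = k := by omega
      by_cases hk0 : k = 0
      · exact hbd0 hk0 p (by omega)
      · have e1 : (g p : ℕ) = (g ⟨k, hka⟩ : ℕ) :=
          congrArg Fin.val (fin_app_congr g (show (p : ℕ) = k from hpv))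
        have e2 := hlt (by omega)
        have e3 := hbd ⟨k - 1, hk1a⟩ (show k - 1 < k by omega)
        omega
  · intro p q hp hq
    exact hinc p q (by omega) hq
  · exact hinc ⟨k + 1 - 1, by omega⟩ ⟨k + 1, h⟩ (show k ≤ k + 1 - 1 by omega)
      (show k + 1 - 1 ≤ k + 1 by omega)

lemma invol_sum {K : Type*} [Field K] (m n : ℕ) [NeZero n] (hm : 1 ≤ m)
    (x : Fin m → ZMod n → K) (a : ℕ) (ρ : ZMod n) :
    ∑ σ ∈ (Finset.range (a + 1)).sigma (fun k => Gset m a k),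
      (-1 : K) ^ σ.1 * ∏ p : Fin a, x (σ.2 p) (ρ - 1 - ((p : ℕ) : ZMod n))
    = ∏ p : Fin a, x ⟨m - 1, Nat.sub_lt hm Nat.one_pos⟩ (ρ - 1 - ((p : ℕ) : ZMod n)) := by
  classical
  have hp0mem : (⟨0, fun _ => ⟨m - 1, Nat.sub_lt hm Nat.one_pos⟩⟩ : Σ _ : ℕ, Fin a → Fin m) ∈
      (Finset.range (a + 1)).sigma (fun k => Gset m a k) := by
    rw [Finset.mem_sigma]
    refine ⟨by simp, ?_⟩
    rw [mem_Gset]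
    exact ⟨fun p q _ hq => absurd hq (Nat.not_lt_zero _),
      fun p hp => absurd hp (Nat.not_lt_zero _), fun p q _ _ => le_refl _⟩
  rw [← Finset.add_sum_erase _ _ hp0mem]
  have hfacts : ∀ σ ∈ ((Finset.range (a + 1)).sigma (fun k => Gset m a k)).erase
      (⟨0, fun _ => ⟨m - 1, Nat.sub_lt hm Nat.one_pos⟩⟩ : Σ _ : ℕ, Fin a → Fin m),
      σ.1 ≤ a ∧ P m a σ.1 σ.2 ∧ ¬ (σ.1 = 0 ∧ σ.2 = fun _ => (⟨m - 1, Nat.sub_lt hm Nat.one_pos⟩ : Fin m)) := by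
    rintro ⟨k, g⟩ hσ
    rw [Finset.mem_erase, Finset.mem_sigma] at hσ
    obtain ⟨hne, h1, h2⟩ := hσ
    have h1' : k < a + 1 := Finset.mem_range.mp h1
    have h2' : P m a k g := mem_Gset.mp h2
    have hka : k ≤ a := by omega
    refine ⟨hka, h2', ?_⟩
    rintro ⟨e0, e1⟩
    subst e0
    have e1' : g = fun _ => (⟨m - 1, Nat.sub_lt hm Nat.one_pos⟩ : Fin m) := e1
    exact hne (by rw [e1'])
  have hz : ∑ σ ∈ ((Finset.range (a + 1)).sigma (fun k => Gset m a k)).erase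
      (⟨0, fun _ => ⟨m - 1, Nat.sub_lt hm Nat.one_pos⟩⟩ : Σ _ : ℕ, Fin a → Fin m),
      (-1 : K) ^ σ.1 * ∏ p : Fin a, x (σ.2 p) (ρ - 1 - ((p : ℕ) : ZMod n)) = 0 := by
    refine Finset.sum_involution (fun σ _ => invol m a σ) ?_ ?_ ?_ ?_
    · rintro ⟨k, g⟩ hσ
      by_cases hcd : CanDec m a k g
      · have hiv : invol m a ⟨k, g⟩ = (⟨k - 1, g⟩ : Σ _ : ℕ, Fin a → Fin m) := by
          unfold invol; rw [if_pos hcd]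
        simp only [hiv]
        have hpow : (-1 : K) ^ (k - 1) = -(-1 : K) ^ k := by
          conv_rhs => rw [show k = (k - 1) + 1 by have := hcd.1; omega]
          rw [pow_succ]; ring
        rw [hpow]
        ring
      · have hiv : invol m a ⟨k, g⟩ = (⟨k + 1, g⟩ : Σ _ : ℕ, Fin a → Fin m) := by
          unfold invol; rw [if_neg hcd]
        simp only [hiv]
        rw [pow_succ]
        ring
    · rintro ⟨k, g⟩ hσ hf0
      by_cases hcd : CanDec m a k g
      · have hiv : invol m a ⟨k, g⟩ = (⟨k - 1, g⟩ : Σ _ : ℕ, Fin a → Fin m) := by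
          unfold invol; rw [if_pos hcd]
        simp only [hiv]
        intro he
        have h1 : k - 1 = k := congrArg Sigma.fst he
        have := hcd.1
        omega
      · have hiv : invol m a ⟨k, g⟩ = (⟨k + 1, g⟩ : Σ _ : ℕ, Fin a → Fin m) := by
          unfold invol; rw [if_neg hcd]
        simp only [hiv]
        intro he
        have h1 : k + 1 = k := congrArg Sigma.fst he
        omega
    · rintro ⟨k, g⟩ hσ
      obtain ⟨hka, hP, hne'⟩ := hfacts ⟨k, g⟩ hσ
      have hka' : k ≤ a := hka
      have hP' : P m a k g := hP
      have hne'' : ¬ (k = 0 ∧ g = fun _ => (⟨m - 1, Nat.sub_lt hm Nat.one_pos⟩ : Fin m)) := hne'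
      by_cases hcd : CanDec m a k g
      · have hiv : invol m a ⟨k, g⟩ = (⟨k - 1, g⟩ : Σ _ : ℕ, Fin a → Fin m) := by
          unfold invol; rw [if_pos hcd]
        simp only [hiv]
        obtain ⟨hQ, hncd, hnp0⟩ := hA m a hm k g hka' hP' hcd
        rw [Finset.mem_erase, Finset.mem_sigma]
        refine ⟨?_, Finset.mem_range.mpr (show k - 1 < a + 1 by omega), mem_Gset.mpr hQ⟩
        intro he
        have he1 : k - 1 = 0 := congrArg Sigma.fst he
        have he2 : g = fun _ => (⟨m - 1, Nat.sub_lt hm Nat.one_pos⟩ : Fin m) :=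
          congrArg (fun s : Σ _ : ℕ, Fin a → Fin m => s.snd) he
        exact hnp0 ⟨he1, he2⟩
      · have hiv : invol m a ⟨k, g⟩ = (⟨k + 1, g⟩ : Σ _ : ℕ, Fin a → Fin m) := by
          unfold invol; rw [if_neg hcd]
        simp only [hiv]
        obtain ⟨hk1a, hQ, hcd'⟩ := hB m a hm k g hka' hP' hne'' hcd
        rw [Finset.mem_erase, Finset.mem_sigma]
        refine ⟨?_, Finset.mem_range.mpr (show k + 1 < a + 1 by omega), mem_Gset.mpr hQ⟩
        intro he
        have he1 : k + 1 = 0 := congrArg Sigma.fst he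
        omega
    · rintro ⟨k, g⟩ hσ
      obtain ⟨hka, hP, hne'⟩ := hfacts ⟨k, g⟩ hσ
      have hka' : k ≤ a := hka
      have hP' : P m a k g := hP
      have hne'' : ¬ (k = 0 ∧ g = fun _ => (⟨m - 1, Nat.sub_lt hm Nat.one_pos⟩ : Fin m)) := hne'
      by_cases hcd : CanDec m a k g
      · have hiv : invol m a ⟨k, g⟩ = (⟨k - 1, g⟩ : Σ _ : ℕ, Fin a → Fin m) := by
          unfold invol; rw [if_pos hcd]
        obtain ⟨hQ, hncd, hnp0⟩ := hA m a hm k g hka' hP' hcd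
        have hiv2 : invol m a ⟨k - 1, g⟩ = (⟨k - 1 + 1, g⟩ : Σ _ : ℕ, Fin a → Fin m) := by
          unfold invol; rw [if_neg hncd]
        simp only [hiv, hiv2]
        exact congrArg (fun t => (⟨t, g⟩ : Σ _ : ℕ, Fin a → Fin m))
          (by have := hcd.1; omega)
      · have hiv : invol m a ⟨k, g⟩ = (⟨k + 1, g⟩ : Σ _ : ℕ, Fin a → Fin m) := by
          unfold invol; rw [if_neg hcd]
        obtain ⟨hk1a, hQ, hcd'⟩ := hB m a hm k g hka' hP' hne'' hcd
        have hiv2 : invol m a ⟨k + 1, g⟩ = (⟨k + 1 - 1, g⟩ : Σ _ : ℕ, Fin a → Fin m) := by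
          unfold invol; rw [if_pos hcd']
        simp only [hiv, hiv2]
        exact congrArg (fun t => (⟨t, g⟩ : Σ _ : ℕ, Fin a → Fin m)) (by omega)
  rw [hz, add_zero]
  norm_num

lemma core {K : Type*} [Field K] (m n : ℕ) [NeZero n] (hm : 1 ≤ m)
    (x : Fin m → ZMod n → K) (a : ℕ) (ρ : ZMod n) :
    ∑ k ∈ Finset.range m, (-1 : K) ^ k *
      (loopE (m - 1) n (fun b => x (Fin.castLE (Nat.sub_le m 1) b)) k (ρ - (k : ZMod n)) *
        loopHZ m n x ((a : ℤ) - (k : ℤ)) (ρ - (a : ZMod n)))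
    = singleH n (x ⟨m - 1, Nat.sub_lt hm Nat.one_pos⟩) a (ρ - (a : ZMod n)) := by
  classical
  have hterm : ∀ k, (-1 : K) ^ k *
      (loopE (m - 1) n (fun b => x (Fin.castLE (Nat.sub_le m 1) b)) k (ρ - (k : ZMod n)) *
        loopHZ m n x ((a : ℤ) - (k : ℤ)) (ρ - (a : ZMod n)))
      = (if k ≤ a then (-1 : K) ^ k *
          ∑ g ∈ Gset m a k, ∏ p : Fin a, x (g p) (ρ - 1 - ((p : ℕ) : ZMod n)) else 0) := by
    intro k
    by_cases hk : k ≤ a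
    · rw [if_pos hk]
      have hz : loopHZ m n x ((a : ℤ) - (k : ℤ)) (ρ - (a : ZMod n))
          = loopH m n x (a - k) (ρ - (a : ZMod n)) := by
        rw [loopHZ, if_neg (by omega)]
        congr 1
        omega
      rw [hz, bridge m n hm x a k hk ρ]
    · rw [if_neg hk, loopHZ, if_pos (by omega : (a : ℤ) - (k : ℤ) < 0), mul_zero, mul_zero]
  rw [Finset.sum_congr rfl (fun k _ => hterm k)]
  have hext1 : ∑ k ∈ Finset.range m, (if k ≤ a then (-1 : K) ^ k *
        ∑ g ∈ Gset m a k, ∏ p : Fin a, x (g p) (ρ - 1 - ((p : ℕ) : ZMod n)) else 0)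
      = ∑ k ∈ Finset.range (max m (a + 1)), (if k ≤ a then (-1 : K) ^ k *
        ∑ g ∈ Gset m a k, ∏ p : Fin a, x (g p) (ρ - 1 - ((p : ℕ) : ZMod n)) else 0) := by
    refine Finset.sum_subset (Finset.range_subset_range.mpr (le_max_left _ _)) ?_
    intro k hk hnk
    have hmk : m ≤ k := by
      have := Finset.mem_range.mp hk
      have h2 : ¬ k < m := fun h => hnk (Finset.mem_range.mpr h)
      omega
    by_cases hka : k ≤ a
    · rw [if_pos hka, Gset_empty m a k hm hmk hka, Finset.sum_empty, mul_zero]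
    · rw [if_neg hka]
  have hext2 : ∑ k ∈ Finset.range (a + 1), (if k ≤ a then (-1 : K) ^ k *
        ∑ g ∈ Gset m a k, ∏ p : Fin a, x (g p) (ρ - 1 - ((p : ℕ) : ZMod n)) else 0)
      = ∑ k ∈ Finset.range (max m (a + 1)), (if k ≤ a then (-1 : K) ^ k *
        ∑ g ∈ Gset m a k, ∏ p : Fin a, x (g p) (ρ - 1 - ((p : ℕ) : ZMod n)) else 0) := by
    refine Finset.sum_subset (Finset.range_subset_range.mpr (le_max_right _ _)) ?_
    intro k hk hnk
    have : ¬ k ≤ a := by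
      have h2 : ¬ k < a + 1 := fun h => hnk (Finset.mem_range.mpr h)
      omega
    rw [if_neg this]
  rw [hext1, ← hext2]
  have hstep : ∑ k ∈ Finset.range (a + 1), (if k ≤ a then (-1 : K) ^ k *
        ∑ g ∈ Gset m a k, ∏ p : Fin a, x (g p) (ρ - 1 - ((p : ℕ) : ZMod n)) else 0)
      = ∑ k ∈ Finset.range (a + 1), ∑ g ∈ Gset m a k,
          (-1 : K) ^ k * ∏ p : Fin a, x (g p) (ρ - 1 - ((p : ℕ) : ZMod n)) := by
    refine Finset.sum_congr rfl fun k hk => ?_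
    rw [if_pos (by have := Finset.mem_range.mp hk; omega : k ≤ a), Finset.mul_sum]
  rw [hstep, Finset.sum_sigma' (Finset.range (a + 1)) (fun k => Gset m a k)
    (fun k g => (-1 : K) ^ k * ∏ p : Fin a, x (g p) (ρ - 1 - ((p : ℕ) : ZMod n))),
    invol_sum m n hm x a ρ]
  rw [singleH, ← Fin.prod_univ_eq_prod_range
    (fun s => x ⟨m - 1, Nat.sub_lt hm Nat.one_pos⟩ (ρ - (a : ZMod n) + (s : ZMod n))) a]
  rw [Fin.prod_univ_eq_prod_range
      (fun p => x ⟨m - 1, Nat.sub_lt hm Nat.one_pos⟩ (ρ - 1 - (p : ZMod n))) a,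
    Fin.prod_univ_eq_prod_range
      (fun s => x ⟨m - 1, Nat.sub_lt hm Nat.one_pos⟩ (ρ - (a : ZMod n) + (s : ZMod n))) a,
    ← Finset.prod_range_reflect
      (fun p => x ⟨m - 1, Nat.sub_lt hm Nat.one_pos⟩ (ρ - 1 - (p : ZMod n))) a]
  refine Finset.prod_congr rfl fun j hj => ?_
  have hj' : j < a := Finset.mem_range.mp hj
  congr 1
  rw [show a - 1 - j = a - (1 + j) from by omega, Nat.cast_sub (by omega : 1 + j ≤ a)]
  push_cast
  ring

end S16

/-- The matrix identity `H_α^{(r-m+1)} M^{(r)} = A_α^{(r)}` underlying the ratio of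
alternants formula, i.e. for all `i, j` (written with 0-based `i, j`, so paper indices
are `i+1, j+1`):
`Σ_{k=1}^m h_{α_i - m + k}^{(r - α_i + 1)} (-1)^{m-k} t_{j,m}(e_{m-k}^{(r+k+1-m)}[m])
  = t_{j,m}(h_{α_i}^{(r - α_i + 1)}(x_m))`.
Here `t_{j,m}` is formalized as any ring homomorphism `τ j` fixing all loop elementary
and homogeneous symmetric functions in `x_1, …, x_m` (as the birational transpositions do). -/
theorem statement16 {K : Type*} [Field K] (m n : ℕ) [NeZero n] (hm : 1 ≤ m)
    (x : Fin m → ZMod n → K)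
    (τ : Fin m → (K →+* K))
    (hτh : ∀ (j : Fin m) (k : ℕ) (c : ZMod n), τ j (loopH m n x k c) = loopH m n x k c)
    (hτe : ∀ (j : Fin m) (k : ℕ) (c : ZMod n), τ j (loopE m n x k c) = loopE m n x k c)
    (α : Fin m → ℕ) (r : ZMod n) :
    (Matrix.of fun i j : Fin m =>
        loopHZ m n x ((α i : ℤ) - (m : ℤ) + (j : ℕ) + 1)
          (r - (α i : ZMod n) + 1)) *
      (Matrix.of fun i j : Fin m =>
        (-1 : K) ^ (m - 1 - (i : ℕ)) *
          τ j (loopE (m - 1) n (fun b => x (Fin.castLE (Nat.sub_le m 1) b))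
            (m - 1 - (i : ℕ)) (r + ((i : ℕ) : ZMod n) + 2 - (m : ZMod n)))) =
    Matrix.of fun i j : Fin m =>
      τ j (singleH n (x ⟨m - 1, by omega⟩) (α i) (r - (α i : ZMod n) + 1)) := by
  ext i j
  rw [Matrix.mul_apply]
  simp only [Matrix.of_apply]
  have hτz : ∀ (z : ℤ) (c : ZMod n), τ j (loopHZ m n x z c) = loopHZ m n x z c := by
    intro z c
    rw [loopHZ]
    split
    · exact map_zero _
    · exact hτh j _ _
  have hsum : ∀ t : Fin m,
      loopHZ m n x ((α i : ℤ) - (m : ℤ) + (t : ℕ) + 1) (r - (α i : ZMod n) + 1) *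
        ((-1 : K) ^ (m - 1 - (t : ℕ)) *
          τ j (loopE (m - 1) n (fun b => x (Fin.castLE (Nat.sub_le m 1) b))
            (m - 1 - (t : ℕ)) (r + ((t : ℕ) : ZMod n) + 2 - (m : ZMod n))))
      = τ j ((-1 : K) ^ (m - 1 - (t : ℕ)) *
          (loopE (m - 1) n (fun b => x (Fin.castLE (Nat.sub_le m 1) b))
              (m - 1 - (t : ℕ)) (r + ((t : ℕ) : ZMod n) + 2 - (m : ZMod n)) *
            loopHZ m n x ((α i : ℤ) - (m : ℤ) + (t : ℕ) + 1) (r - (α i : ZMod n) + 1))) := by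
    intro t
    rw [map_mul, map_mul, map_pow, map_neg, map_one, hτz]
    ring
  rw [Finset.sum_congr rfl (fun t _ => hsum t), ← map_sum]
  congr 1
  rw [Fin.sum_univ_eq_sum_range (fun t => ((-1 : K) ^ (m - 1 - t) *
      (loopE (m - 1) n (fun b => x (Fin.castLE (Nat.sub_le m 1) b))
          (m - 1 - t) (r + (t : ZMod n) + 2 - (m : ZMod n)) *
        loopHZ m n x ((α i : ℤ) - (m : ℤ) + (t : ℕ) + 1) (r - (α i : ZMod n) + 1)))) m]
  rw [← Finset.sum_range_reflect]
  have hcore := S16.core m n hm x (α i) (r + 1)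
  have hpt : ∀ k ∈ Finset.range m, ((-1 : K) ^ (m - 1 - (m - 1 - k)) *
      (loopE (m - 1) n (fun b => x (Fin.castLE (Nat.sub_le m 1) b))
          (m - 1 - (m - 1 - k)) (r + ((m - 1 - k : ℕ) : ZMod n) + 2 - (m : ZMod n)) *
        loopHZ m n x ((α i : ℤ) - (m : ℤ) + ((m - 1 - k : ℕ) : ℕ) + 1) (r - (α i : ZMod n) + 1)))
      = ((-1 : K) ^ k *
      (loopE (m - 1) n (fun b => x (Fin.castLE (Nat.sub_le m 1) b)) k (r + 1 - (k : ZMod n)) *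
        loopHZ m n x ((α i : ℤ) - (k : ℤ)) (r + 1 - ((α i : ℕ) : ZMod n)))) := by
    intro k hk
    have hk' : k < m := Finset.mem_range.mp hk
    rw [show m - 1 - (m - 1 - k) = k from by omega,
      show (r : ZMod n) + ((m - 1 - k : ℕ) : ZMod n) + 2 - (m : ZMod n)
          = r + 1 - (k : ZMod n) from by
        rw [show m - 1 - k = m - (1 + k) from by omega,
          Nat.cast_sub (by omega : 1 + k ≤ m)]
        push_cast
        ring,
      show (α i : ℤ) - (m : ℤ) + ((m - 1 - k : ℕ) : ℕ) + 1 = (α i : ℤ) - (k : ℤ) from by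
        rw [show m - 1 - k = m - (1 + k) from by omega]
        rw [Int.ofNat_sub (by omega : 1 + k ≤ m)]
        push_cast
        ring,
      show (r : ZMod n) - ((α i : ℕ) : ZMod n) + 1 = r + 1 - ((α i : ℕ) : ZMod n) from by ring]
  rw [Finset.sum_congr rfl hpt, hcore]
  rw [singleH, singleH]
  refine Finset.prod_congr rfl fun s hs => ?_
  congr 1
  ring
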